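/- Let Σ = {a, b, c} and let w ∈ {a, b}^n contain at least one occurrence of b. Then the edit distance between x = aca · w · cac and y = cac · w · aca is strictly greater than 2. -/

import Mathlib

/-- Costs for the Levenshtein distance (removed from Mathlib; restored with its old meaning). -/
structure Levenshtein.Cost (α β δ : Type*) where
  delete : α → δ
  insert : β → δ
  substitute : α → β → δ

/-- The default cost: every deletion, insertion and substitution of unequal letters costs 1. -/
def Levenshtein.defaultCost {α : Type*} [DecidableEq α] : Levenshtein.Cost α α ℕ where
  delete _ := 1
  insert _ := 1
  substitute a b := if a = b then 0 else 1

/-- One step of the dynamic programming table, as in the old Mathlib. -/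
def Levenshtein.impl {α β δ : Type*} [AddZeroClass δ] [Min δ] (C : Levenshtein.Cost α β δ)
    (xs : List α) (y : β) (d : {r : List δ // 0 < r.length}) :
    {r : List δ // 0 < r.length} :=
  let ⟨ds, w⟩ := d
  xs.zip (ds.zip ds.tail) |>.foldr
    (init := ⟨[C.insert y + ds.getLast (List.length_pos_iff.mp w)], by simp⟩)
    (fun ⟨x, d₀, d₁⟩ ⟨r, w⟩ =>
      let min := min (C.delete x + r[0]) (min (C.insert y + d₀) (C.substitute x y + d₁))
      ⟨min :: r, by simp⟩)

/-- Levenshtein distances of all suffixes of `xs` to `ys`, as in the old Mathlib. -/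
def suffixLevenshtein {α β δ : Type*} [AddZeroClass δ] [Min δ] (C : Levenshtein.Cost α β δ)
    (xs : List α) (ys : List β) : {r : List δ // 0 < r.length} :=
  ys.foldr
    (Levenshtein.impl C xs)
    (xs.foldr (init := ⟨[0], by simp⟩) (fun a ⟨r, w⟩ => ⟨(C.delete a + r[0]) :: r, by simp⟩))

/-- The Levenshtein distance, as in the old Mathlib. -/
def levenshtein {α β δ : Type*} [AddZeroClass δ] [Min δ] (C : Levenshtein.Cost α β δ)
    (xs : List α) (ys : List β) : δ :=
  let ⟨r, w⟩ := suffixLevenshtein C xs ys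
  r[0]


section LevenshteinPort

variable {α β δ : Type*} [AddZeroClass δ] [Min δ] (C : Levenshtein.Cost α β δ)

@[simp] theorem Levenshtein.defaultCost_delete {α : Type*} [DecidableEq α] (a : α) :
    (Levenshtein.defaultCost : Levenshtein.Cost α α ℕ).delete a = 1 := rfl
@[simp] theorem Levenshtein.defaultCost_insert {α : Type*} [DecidableEq α] (a : α) :
    (Levenshtein.defaultCost : Levenshtein.Cost α α ℕ).insert a = 1 := rfl
@[simp] theorem Levenshtein.defaultCost_substitute {α : Type*} [DecidableEq α] (a b : α) :
    (Levenshtein.defaultCost : Levenshtein.Cost α α ℕ).substitute a b = if a = b then 0 else 1 :=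
  rfl

theorem Levenshtein.impl_cons {x : α} {xs : List α} {y : β} {d : δ} {ds : List δ}
    (w : 0 < (d :: ds).length) (w' : 0 < ds.length) :
    Levenshtein.impl C (x :: xs) y ⟨d :: ds, w⟩ =
      ⟨min (C.delete x + (Levenshtein.impl C xs y ⟨ds, w'⟩).1[0]'(Levenshtein.impl C xs y ⟨ds, w'⟩).2)
        (min (C.insert y + d) (C.substitute x y + ds[0])) ::
        (Levenshtein.impl C xs y ⟨ds, w'⟩).1, by simp⟩ :=
  match ds, w' with | _ :: _, _ => rfl

theorem Levenshtein.impl_length {xs : List α} {y : β} (d : {r : List δ // 0 < r.length})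
    (w : d.1.length = xs.length + 1) :
    (Levenshtein.impl C xs y d).1.length = xs.length + 1 := by
  induction xs generalizing d with
  | nil => rfl
  | cons x xs ih =>
    match d, w with
    | ⟨d₁ :: d₂ :: ds, _⟩, w =>
      rw [Levenshtein.impl_cons C (by simp) (by simp)]
      simp only [List.length_cons]
      congr 1
      exact ih ⟨d₂ :: ds, (by simp)⟩ (by simpa using w)

theorem suffixLevenshtein_length (xs : List α) (ys : List β) :
    (suffixLevenshtein C xs ys).1.length = xs.length + 1 := by
  induction ys with
  | nil =>
    dsimp [suffixLevenshtein]
    induction xs with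
    | nil => rfl
    | cons _ xs ih => simp_all
  | cons y ys ih =>
    show (Levenshtein.impl C xs y (suffixLevenshtein C xs ys)).1.length = _
    exact Levenshtein.impl_length C _ ih

theorem suffixLevenshtein_cons₁_aux {α} {x y : {r : List α // 0 < r.length}}
    (w₀ : x.1[0]'x.2 = y.1[0]'y.2) (w : x.1.tail = y.1.tail) : x = y := by
  match x, y with
  | ⟨hx :: tx, _⟩, ⟨hy :: ty, _⟩ => simp_all

theorem suffixLevenshtein_cons₁ (x : α) (xs : List α) (ys : List β) :
    suffixLevenshtein C (x :: xs) ys =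
      ⟨levenshtein C (x :: xs) ys :: (suffixLevenshtein C xs ys).1, by simp⟩ := by
  induction ys with
  | nil => rfl
  | cons y ys ih =>
    apply suffixLevenshtein_cons₁_aux
    · rfl
    · show (Levenshtein.impl C (x :: xs) y (suffixLevenshtein C (x :: xs) ys)).1.tail = _
      have hl := suffixLevenshtein_length C xs ys
      rw [ih, Levenshtein.impl_cons C (by simp) (by omega)]
      rfl

theorem levenshtein_eq_zero (xs : List α) (ys : List β) :
    levenshtein C xs ys = (suffixLevenshtein C xs ys).1[0]'(suffixLevenshtein C xs ys).2 := rfl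

theorem suffixLevenshtein_zero_cons (xs : List α) (y : β) (ys : List β) :
    suffixLevenshtein C xs (y :: ys) = Levenshtein.impl C xs y (suffixLevenshtein C xs ys) := rfl

theorem levenshtein_nil_nil : levenshtein C ([] : List α) ([] : List β) = 0 := rfl

theorem levenshtein_nil_cons (y : β) (ys : List β) :
    levenshtein C ([] : List α) (y :: ys) = C.insert y + levenshtein C [] ys := by
  rw [levenshtein_eq_zero, levenshtein_eq_zero, suffixLevenshtein_zero_cons]
  have hl := suffixLevenshtein_length C ([] : List α) ys
  generalize suffixLevenshtein C ([] : List α) ys = s at hl ⊢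
  obtain ⟨l, hp⟩ := s
  match l, hp, hl with
  | [a], _, _ => rfl
  | _ :: _ :: _, _, h => simp at h

theorem levenshtein_cons_nil (x : α) (xs : List α) :
    levenshtein C (x :: xs) ([] : List β) = C.delete x + levenshtein C xs [] := rfl

theorem levenshtein_cons_cons (x : α) (xs : List α) (y : β) (ys : List β) :
    levenshtein C (x :: xs) (y :: ys) =
      min (C.delete x + levenshtein C xs (y :: ys))
        (min (C.insert y + levenshtein C (x :: xs) ys)
          (C.substitute x y + levenshtein C xs ys)) := by
  rw [levenshtein_eq_zero, suffixLevenshtein_zero_cons, suffixLevenshtein_cons₁]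
  have hl := suffixLevenshtein_length C xs ys
  rw [Levenshtein.impl_cons C (by simp) (by omega)]
  simp only [List.getElem_cons_zero]
  rfl

end LevenshteinPort

open Levenshtein

private lemma one_le_lev : ∀ (u v : List (Fin 3)), u ≠ v →
    1 ≤ levenshtein Levenshtein.defaultCost u v := by
  intro u
  induction u with
  | nil =>
    intro v h
    match v with
    | [] => exact absurd rfl h
    | y :: ys =>
      simp only [levenshtein_nil_cons, Levenshtein.defaultCost_insert]
      omega
  | cons x xs ih =>
    intro v h
    match v with
    | [] =>
      simp only [levenshtein_cons_nil, Levenshtein.defaultCost_delete]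
      omega
    | y :: ys =>
      rw [levenshtein_cons_cons]
      simp only [Levenshtein.defaultCost_delete, Levenshtein.defaultCost_insert,
        Levenshtein.defaultCost_substitute]
      by_cases hxy : x = y
      · subst hxy
        rw [if_pos rfl]
        have hne : xs ≠ ys := fun e => h (by rw [e])
        have := ih ys hne
        omega
      · rw [if_neg hxy]
        omega

private lemma len_ne {u v : List (Fin 3)} (h : u.length ≠ v.length) : u ≠ v :=
  fun e => h (by rw [e])

private lemma key : ∀ (v : List (Fin 3)), (1 : Fin 3) ∈ v →
    2 ≤ levenshtein Levenshtein.defaultCost (0 :: (v ++ [2, 0, 2])) (v ++ [0, 2, 0]) := by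
  intro v
  induction v with
  | nil => intro h; simp at h
  | cons v₀ v' ih =>
    intro h
    simp only [List.cons_append]
    rw [levenshtein_cons_cons]
    simp only [Levenshtein.defaultCost_delete, Levenshtein.defaultCost_insert,
      Levenshtein.defaultCost_substitute]
    have h1 : 1 ≤ levenshtein Levenshtein.defaultCost (v₀ :: (v' ++ [2, 0, 2]))
        (v₀ :: (v' ++ [0, 2, 0])) := one_le_lev _ _ (by simp)
    have h2 : 1 ≤ levenshtein Levenshtein.defaultCost (0 :: v₀ :: (v' ++ [2, 0, 2]))
        (v' ++ [0, 2, 0]) := one_le_lev _ _ (len_ne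
          (by simp only [List.length_cons, List.length_append, List.length_nil]; omega))
    by_cases hv : v₀ = 0
    · subst hv
      rw [if_pos rfl]
      have h3 := ih (by simpa using h)
      omega
    · rw [if_neg (fun e => hv e.symm)]
      have h3 : 1 ≤ levenshtein Levenshtein.defaultCost (v₀ :: (v' ++ [2, 0, 2]))
          (v' ++ [0, 2, 0]) := one_le_lev _ _ (len_ne
            (by simp only [List.length_cons, List.length_append, List.length_nil]; omega))
      omega


theorem gadget_editDistance_gt_two (w : List (Fin 3))
    (hw : ∀ ch ∈ w, ch = 0 ∨ ch = 1) (hb : (1 : Fin 3) ∈ w) :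
    2 < levenshtein Levenshtein.defaultCost
      ([0, 2, 0] ++ w ++ [2, 0, 2])
      ([2, 0, 2] ++ w ++ [0, 2, 0]) := by
  obtain ⟨w₀, w', rfl⟩ : ∃ a l, w = a :: l := by
    cases w with
    | nil => simp at hb
    | cons a l => exact ⟨a, l, rfl⟩
  have hw₀ : w₀ ≠ 2 := by
    rcases hw w₀ (by simp) with h | h <;> simp [h]
  have lne : ∀ {u v : List (Fin 3)}, u.length ≠ v.length →
      1 ≤ levenshtein Levenshtein.defaultCost u v := fun h => one_le_lev _ _ (len_ne h)
  -- C₃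
  have C3 : 2 ≤ levenshtein Levenshtein.defaultCost (w₀ :: (w' ++ [2, 0, 2]))
      (2 :: w₀ :: (w' ++ [0, 2, 0])) := by
    rw [levenshtein_cons_cons]
    simp only [Levenshtein.defaultCost_delete, Levenshtein.defaultCost_insert,
      Levenshtein.defaultCost_substitute]
    rw [if_neg hw₀]
    have d1 : 1 ≤ levenshtein Levenshtein.defaultCost (w' ++ [2, 0, 2])
        (2 :: w₀ :: (w' ++ [0, 2, 0])) := lne (by simp only [List.length_cons, List.length_append, List.length_nil]; omega)
    have d2 : 1 ≤ levenshtein Levenshtein.defaultCost (w₀ :: (w' ++ [2, 0, 2]))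
        (w₀ :: (w' ++ [0, 2, 0])) := one_le_lev _ _ (by simp)
    have d3 : 1 ≤ levenshtein Levenshtein.defaultCost (w' ++ [2, 0, 2])
        (w₀ :: (w' ++ [0, 2, 0])) := lne (by simp)
    omega
  -- B₃
  have B3 : 2 ≤ levenshtein Levenshtein.defaultCost (0 :: w₀ :: (w' ++ [2, 0, 2]))
      (0 :: 2 :: w₀ :: (w' ++ [0, 2, 0])) := by
    rw [levenshtein_cons_cons]
    simp only [Levenshtein.defaultCost_delete, Levenshtein.defaultCost_insert,
      Levenshtein.defaultCost_substitute]
    simp only [if_true]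
    have c1 : 1 ≤ levenshtein Levenshtein.defaultCost (w₀ :: (w' ++ [2, 0, 2]))
        (0 :: 2 :: w₀ :: (w' ++ [0, 2, 0])) := lne (by simp only [List.length_cons, List.length_append, List.length_nil]; omega)
    have c2 : 1 ≤ levenshtein Levenshtein.defaultCost (0 :: w₀ :: (w' ++ [2, 0, 2]))
        (2 :: w₀ :: (w' ++ [0, 2, 0])) := one_le_lev _ _ (by simp)
    omega
  -- A₁
  have A1 : 2 ≤ levenshtein Levenshtein.defaultCost (2 :: 0 :: w₀ :: (w' ++ [2, 0, 2]))
      (2 :: 0 :: 2 :: w₀ :: (w' ++ [0, 2, 0])) := by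
    rw [levenshtein_cons_cons]
    simp only [Levenshtein.defaultCost_delete, Levenshtein.defaultCost_insert,
      Levenshtein.defaultCost_substitute]
    simp only [if_true]
    have b1 : 1 ≤ levenshtein Levenshtein.defaultCost (0 :: w₀ :: (w' ++ [2, 0, 2]))
        (2 :: 0 :: 2 :: w₀ :: (w' ++ [0, 2, 0])) := lne (by simp only [List.length_cons, List.length_append, List.length_nil]; omega)
    have b2 : 1 ≤ levenshtein Levenshtein.defaultCost (2 :: 0 :: w₀ :: (w' ++ [2, 0, 2]))
        (0 :: 2 :: w₀ :: (w' ++ [0, 2, 0])) := one_le_lev _ _ (by simp)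
    omega
  -- F₃ via key lemma
  have F3 : 2 ≤ levenshtein Levenshtein.defaultCost (0 :: w₀ :: (w' ++ [2, 0, 2]))
      (w₀ :: (w' ++ [0, 2, 0])) := by
    have := key (w₀ :: w') hb
    simpa only [List.cons_append] using this
  -- E₃
  have E3 : 2 ≤ levenshtein Levenshtein.defaultCost (2 :: 0 :: w₀ :: (w' ++ [2, 0, 2]))
      (2 :: w₀ :: (w' ++ [0, 2, 0])) := by
    rw [levenshtein_cons_cons]
    simp only [Levenshtein.defaultCost_delete, Levenshtein.defaultCost_insert,
      Levenshtein.defaultCost_substitute]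
    simp only [if_true]
    have f1 : 1 ≤ levenshtein Levenshtein.defaultCost (0 :: w₀ :: (w' ++ [2, 0, 2]))
        (2 :: w₀ :: (w' ++ [0, 2, 0])) := one_le_lev _ _ (by simp)
    have f2 : 1 ≤ levenshtein Levenshtein.defaultCost (2 :: 0 :: w₀ :: (w' ++ [2, 0, 2]))
        (w₀ :: (w' ++ [0, 2, 0])) := lne (by simp only [List.length_cons, List.length_append, List.length_nil]; omega)
    omega
  -- A₂
  have A2 : 2 ≤ levenshtein Levenshtein.defaultCost (0 :: 2 :: 0 :: w₀ :: (w' ++ [2, 0, 2]))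
      (0 :: 2 :: w₀ :: (w' ++ [0, 2, 0])) := by
    rw [levenshtein_cons_cons]
    simp only [Levenshtein.defaultCost_delete, Levenshtein.defaultCost_insert,
      Levenshtein.defaultCost_substitute]
    simp only [if_true]
    have e1 : 1 ≤ levenshtein Levenshtein.defaultCost (2 :: 0 :: w₀ :: (w' ++ [2, 0, 2]))
        (0 :: 2 :: w₀ :: (w' ++ [0, 2, 0])) := one_le_lev _ _ (by simp)
    have e2 : 1 ≤ levenshtein Levenshtein.defaultCost (0 :: 2 :: 0 :: w₀ :: (w' ++ [2, 0, 2]))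
        (2 :: w₀ :: (w' ++ [0, 2, 0])) := lne (by simp only [List.length_cons, List.length_append, List.length_nil]; omega)
    omega
  -- A₃
  have A3 : 2 ≤ levenshtein Levenshtein.defaultCost (2 :: 0 :: w₀ :: (w' ++ [2, 0, 2]))
      (0 :: 2 :: w₀ :: (w' ++ [0, 2, 0])) := by
    rw [levenshtein_cons_cons]
    simp only [Levenshtein.defaultCost_delete, Levenshtein.defaultCost_insert,
      Levenshtein.defaultCost_substitute]
    rw [if_neg (by decide : ¬(2 : Fin 3) = 0)]
    have a31 : 1 ≤ levenshtein Levenshtein.defaultCost (0 :: w₀ :: (w' ++ [2, 0, 2]))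
        (0 :: 2 :: w₀ :: (w' ++ [0, 2, 0])) := lne (by simp only [List.length_cons, List.length_append, List.length_nil]; omega)
    have a32 : 1 ≤ levenshtein Levenshtein.defaultCost (2 :: 0 :: w₀ :: (w' ++ [2, 0, 2]))
        (2 :: w₀ :: (w' ++ [0, 2, 0])) := lne (by simp only [List.length_cons, List.length_append, List.length_nil]; omega)
    have a33 : 1 ≤ levenshtein Levenshtein.defaultCost (0 :: w₀ :: (w' ++ [2, 0, 2]))
        (2 :: w₀ :: (w' ++ [0, 2, 0])) := one_le_lev _ _ (by simp)
    omega
  -- main goal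
  simp only [List.append_assoc, List.cons_append, List.nil_append]
  rw [levenshtein_cons_cons]
  simp only [Levenshtein.defaultCost_delete, Levenshtein.defaultCost_insert,
    Levenshtein.defaultCost_substitute]
  rw [if_neg (by decide : ¬(0 : Fin 3) = 2)]
  omega
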